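/- arXiv:2204.04448 — 2 statements merged into one kernel-verified Lean document; each statement's English description precedes it below -/
import Mathlib

section
/- Let Q be a left quasigroup and N a normal subgroup of LMlt(Q). Define x σ_N y iff the stabilizers N_x and N_y coincide. Then each σ_N-class is a block for the action of LMlt(Q), and if Q is idempotent each σ_N-class is a subalgebra of Q. -/
/-! Basic theory of left quasigroups, following the paper. -/

structure LeftQuasigroup (Q : Type*) where
  op : Q → Q → Q
  ld : Q → Q → Q
  op_ld : ∀ x y, op x (ld x y) = y
  ld_op : ∀ x y, ld x (op x y) = y

/-- Orbit relation of a subgroup of permutations. -/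
def orbRel {Q : Type*} (N : Subgroup (Equiv.Perm Q)) (x y : Q) : Prop := ∃ h ∈ N, h y = x

/-- Orbit equivalence relation of a subgroup of permutations. -/
def orbSetoid {Q : Type*} (N : Subgroup (Equiv.Perm Q)) : Setoid Q where
  r := orbRel N
  iseqv := by
    constructor
    · exact fun x => ⟨1, N.one_mem, rfl⟩
    · rintro x y ⟨h, hN, rfl⟩
      exact ⟨h⁻¹, N.inv_mem hN, h.symm_apply_apply y⟩
    · rintro x y z ⟨h, hN, rfl⟩ ⟨g, gN, rfl⟩
      exact ⟨h * g, N.mul_mem hN gN, rfl⟩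

/-- The subgroup of permutations moving every point inside its `α`-class. -/
def kerRel {Q : Type*} (α : Setoid Q) : Subgroup (Equiv.Perm Q) where
  carrier := {g | ∀ x, α.r (g x) x}
  one_mem' := fun x => α.refl x
  mul_mem' := by
    intro a b ha hb x
    exact α.trans (ha (b x)) (hb x)
  inv_mem' := by
    intro a ha x
    have := ha (a⁻¹ x)
    rw [show a (a⁻¹ x) = x from a.apply_symm_apply x] at this
    exact α.symm this

/-- Pointwise stabilizer of `x` in `N`. -/
def pstab {Q : Type*} (N : Subgroup (Equiv.Perm Q)) (x : Q) : Subgroup (Equiv.Perm Q) :=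
  N ⊓ MulAction.stabilizer (Equiv.Perm Q) x

/-- Meet of a family of setoids. -/
def infSetoid {Q I : Type*} (α : I → Setoid Q) : Setoid Q where
  r x y := ∀ i, (α i).r x y
  iseqv := ⟨fun x i => (α i).refl x, fun h i => (α i).symm (h i),
    fun h g i => (α i).trans (h i) (g i)⟩

namespace LeftQuasigroup

variable {Q : Type*} (S : LeftQuasigroup Q)

/-- Left translation as a permutation. -/
def L (x : Q) : Equiv.Perm Q := ⟨S.op x, S.ld x, S.ld_op x, S.op_ld x⟩

/-- The left multiplication group. -/
def LMlt : Subgroup (Equiv.Perm Q) := Subgroup.closure (Set.range S.L)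

/-- The displacement group relative to a binary relation `r`. -/
def disRel (r : Q → Q → Prop) : Subgroup (Equiv.Perm Q) :=
  Subgroup.closure {g | ∃ h ∈ S.LMlt, ∃ x y, r x y ∧ g = h * (S.L x * (S.L y)⁻¹) * h⁻¹}

/-- The displacement group. -/
def Dis : Subgroup (Equiv.Perm Q) := S.disRel fun _ _ => True

/-- `Dis^α`. -/
def disUp (α : Setoid Q) : Subgroup (Equiv.Perm Q) := S.Dis ⊓ kerRel α

/-- `LMlt^α`, the kernel of `π_α`. -/
def lmltKer (α : Setoid Q) : Subgroup (Equiv.Perm Q) := S.LMlt ⊓ kerRel α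

/-- Congruences of a left quasigroup. -/
structure IsCongruence (α : Setoid Q) : Prop where
  op_compat : ∀ {x y z w : Q}, α.r x y → α.r z w → α.r (S.op x z) (S.op y w)
  ld_compat : ∀ {x y z w : Q}, α.r x y → α.r z w → α.r (S.ld x z) (S.ld y w)

theorem L_mem_lmlt (x : Q) : S.L x ∈ S.LMlt := Subgroup.subset_closure ⟨x, rfl⟩

theorem disRel_le_lmlt (r : Q → Q → Prop) : S.disRel r ≤ S.LMlt := by
  refine (Subgroup.closure_le _).2 ?_
  rintro g ⟨h, hh, x, y, _, rfl⟩
  exact mul_mem (mul_mem hh (mul_mem (S.L_mem_lmlt x) (inv_mem (S.L_mem_lmlt y)))) (inv_mem hh)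

theorem lmlt_maps {α : Setoid Q} (hα : S.IsCongruence α) {g : Equiv.Perm Q}
    (hg : g ∈ S.LMlt) : ∀ x y, α.r x y → α.r (g x) (g y) := by
  have H : ∀ g ∈ S.LMlt,
      (∀ x y, α.r x y → α.r (g x) (g y)) ∧ (∀ x y, α.r x y → α.r (g⁻¹ x) (g⁻¹ y)) := by
    intro g hg
    induction hg using Subgroup.closure_induction with
    | mem g hgen =>
      obtain ⟨z, rfl⟩ := hgen
      constructor
      · intro x y h; exact hα.op_compat (α.refl z) h
      · intro x y h; exact hα.ld_compat (α.refl z) h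
    | one =>
      constructor <;> intro x y h <;> simpa using h
    | mul a b _ _ ha hb =>
      constructor
      · intro x y h
        exact ha.1 _ _ (hb.1 _ _ h)
      · intro x y h
        have := hb.2 _ _ (ha.2 _ _ h)
        simpa [mul_inv_rev] using this
    | inv a _ ha =>
      refine ⟨ha.2, ?_⟩
      intro x y h
      simpa using ha.1 x y h
  exact (H g hg).1

/-- The blockwise stabilizer `Dis(Q)_{[x]_α}`. -/
def blockStab (α : Setoid Q) (hα : S.IsCongruence α) (x : Q) : Subgroup (Equiv.Perm Q) where
  carrier := {g | g ∈ S.Dis ∧ α.r (g x) x}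
  one_mem' := ⟨S.Dis.one_mem, α.refl x⟩
  mul_mem' := by
    intro a b ha hb
    refine ⟨S.Dis.mul_mem ha.1 hb.1, ?_⟩
    exact α.trans (S.lmlt_maps hα (S.disRel_le_lmlt _ ha.1) _ _ hb.2) ha.2
  inv_mem' := by
    intro a ha
    refine ⟨S.Dis.inv_mem ha.1, ?_⟩
    have h2 := S.lmlt_maps hα (inv_mem (S.disRel_le_lmlt _ ha.1)) _ _ ha.2
    rw [show a⁻¹ (a x) = x from a.symm_apply_apply x] at h2
    exact α.symm h2

/-- The admissible subgroups `Norm(Q)`. -/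
def Norm : Set (Subgroup (Equiv.Perm Q)) :=
  {N | N ≤ S.LMlt ∧ (∀ h ∈ S.LMlt, ∀ n ∈ N, h * n * h⁻¹ ∈ N) ∧ S.disRel (orbRel N) ≤ N}

/-- Image of a subgroup along the canonical projection `π_α`. -/
def piSub (α : Setoid Q) (N : Subgroup (Equiv.Perm Q)) : Subgroup (Equiv.Perm (Quotient α)) where
  carrier := {k | ∃ h ∈ N, ∀ x : Q, k (Quotient.mk α x) = Quotient.mk α (h x)}
  one_mem' := ⟨1, N.one_mem, fun _ => rfl⟩
  mul_mem' := by
    rintro a b ⟨ha, haN, hae⟩ ⟨hb, hbN, hbe⟩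
    refine ⟨ha * hb, N.mul_mem haN hbN, fun x => ?_⟩
    show a (b (Quotient.mk α x)) = _
    rw [hbe, hae]; rfl
  inv_mem' := by
    rintro a ⟨h, hN, he⟩
    refine ⟨h⁻¹, N.inv_mem hN, fun x => ?_⟩
    have h1 := he (h⁻¹ x)
    rw [show h (h⁻¹ x) = x from h.apply_symm_apply x] at h1
    rw [← h1]; exact a.symm_apply_apply _

/-- Preimage of a subgroup along the canonical projection `π_α`. -/
def piPre (α : Setoid Q) (K : Subgroup (Equiv.Perm (Quotient α))) : Subgroup (Equiv.Perm Q) where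
  carrier := {h | h ∈ S.LMlt ∧ ∃ k ∈ K, ∀ x : Q, k (Quotient.mk α x) = Quotient.mk α (h x)}
  one_mem' := ⟨S.LMlt.one_mem, 1, K.one_mem, fun _ => rfl⟩
  mul_mem' := by
    rintro a b ⟨haL, ka, kaK, hae⟩ ⟨hbL, kb, kbK, hbe⟩
    refine ⟨S.LMlt.mul_mem haL hbL, ka * kb, K.mul_mem kaK kbK, fun x => ?_⟩
    show ka (kb (Quotient.mk α x)) = _
    rw [hbe, hae]; rfl
  inv_mem' := by
    rintro a ⟨haL, k, kK, he⟩
    refine ⟨S.LMlt.inv_mem haL, k⁻¹, K.inv_mem kK, fun x => ?_⟩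
    have h1 := he (a⁻¹ x)
    rw [show a (a⁻¹ x) = x from a.apply_symm_apply x] at h1
    rw [← h1]; exact k.symm_apply_apply _

/-- Quotient left quasigroup. -/
def quotLQ (α : Setoid Q) (hα : S.IsCongruence α) : LeftQuasigroup (Quotient α) where
  op := Quotient.lift₂ (fun x y => Quotient.mk α (S.op x y))
    (fun _ _ _ _ h1 h2 => Quotient.sound (hα.op_compat h1 h2))
  ld := Quotient.lift₂ (fun x y => Quotient.mk α (S.ld x y))
    (fun _ _ _ _ h1 h2 => Quotient.sound (hα.ld_compat h1 h2))
  op_ld := fun a b => Quotient.inductionOn₂ a b fun x y => congrArg (Quotient.mk α) (S.op_ld x y)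
  ld_op := fun a b => Quotient.inductionOn₂ a b fun x y => congrArg (Quotient.mk α) (S.ld_op x y)

/-- Idempotent left quasigroup. -/
def Idem : Prop := ∀ x : Q, S.op x x = x

/-- Left distributive law (defining quandles among idempotent left quasigroups). -/
def Ldist : Prop := ∀ x y z : Q, S.op x (S.op y z) = S.op (S.op x y) (S.op x z)

/-- A left quasigroup is faithful if the Cayley kernel is trivial. -/
def Faithful : Prop := ∀ x y : Q, (∀ z, S.op x z = S.op y z) → x = y

/-- Connected: `LMlt` acts transitively. -/
def Connected : Prop := ∀ x y : Q, ∃ h ∈ S.LMlt, h y = x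

/-- Semiregular: `Dis` acts with trivial stabilizers. -/
def Semiregular : Prop := ∀ g ∈ S.Dis, ∀ x : Q, g x = x → g = 1

/-- Subalgebras. -/
def IsSubalgebra (A : Set Q) : Prop :=
  ∀ ⦃x⦄, x ∈ A → ∀ ⦃y⦄, y ∈ A → S.op x y ∈ A ∧ S.ld x y ∈ A

/-- The left quasigroup structure on a subalgebra. -/
def subLQ (A : Set Q) (hA : S.IsSubalgebra A) : LeftQuasigroup A where
  op a b := ⟨S.op a b, (hA a.2 b.2).1⟩
  ld a b := ⟨S.ld a b, (hA a.2 b.2).2⟩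
  op_ld a b := Subtype.ext (S.op_ld a b)
  ld_op a b := Subtype.ext (S.ld_op a b)

/-- Superconnected: every subalgebra is connected. -/
def Superconnected : Prop := ∀ (A : Set Q) (hA : S.IsSubalgebra A), (S.subLQ A hA).Connected

/-- Superfaithful: every subalgebra is faithful. -/
def Superfaithful : Prop := ∀ (A : Set Q) (hA : S.IsSubalgebra A), (S.subLQ A hA).Faithful

theorem infCong {I : Type*} {α : I → Setoid Q} (hc : ∀ i, S.IsCongruence (α i)) :
    S.IsCongruence (infSetoid α) :=
  ⟨fun h1 h2 i => (hc i).op_compat (h1 i) (h2 i),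
   fun h1 h2 i => (hc i).ld_compat (h1 i) (h2 i)⟩

end LeftQuasigroup

/-- Terms in the language of left quasigroups in `n` variables. -/
inductive LQTerm : ℕ → Type
  | var : ∀ {n}, Fin n → LQTerm n
  | op : ∀ {n}, LQTerm n → LQTerm n → LQTerm n
  | ld : ∀ {n}, LQTerm n → LQTerm n → LQTerm n

/-- Evaluation of terms. -/
def evalT {Q : Type*} (S : LeftQuasigroup Q) : ∀ {n}, LQTerm n → (Fin n → Q) → Q
  | _, .var i, v => v i
  | _, .op t s, v => S.op (evalT S t v) (evalT S s v)
  | _, .ld t s, v => S.ld (evalT S t v) (evalT S s v)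

/-- The centralizing relation `C(a, b; d)` of commutator theory. -/
def CC {Q : Type*} (S : LeftQuasigroup Q) (a b d : Q → Q → Prop) : Prop :=
  ∀ (n : ℕ) (t : LQTerm (n + 1)) (x y : Q) (z u : Fin n → Q),
    a x y → (∀ i, b (z i) (u i)) →
    d (evalT S t (Fin.cons x z)) (evalT S t (Fin.cons x u)) →
    d (evalT S t (Fin.cons y z)) (evalT S t (Fin.cons y u))

/-- Nilpotency of length `n` in the sense of commutator theory: the ascending central
series (characterized congruence by congruence) reaches the full congruence at step `n`. -/
def LeftQuasigroup.NilpotentLength {Q : Type*} (S : LeftQuasigroup Q) (n : ℕ) : Prop :=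
  ∃ c : ℕ → Setoid Q,
    (∀ k, S.IsCongruence (c k)) ∧
    (∀ x y : Q, (c 0).r x y ↔ x = y) ∧
    (∀ k, ∀ β : Setoid Q, S.IsCongruence β →
      (CC S β.r (fun _ _ => True) (c k).r ↔ β ≤ c (k + 1))) ∧
    (∀ x y : Q, (c n).r x y)


/-- the classes of `σ_N` are blocks of the action of `LMlt(Q)`, and in the
idempotent case they are subalgebras. -/
theorem stmt10 {Q : Type*} (S : LeftQuasigroup Q) (N : Subgroup (Equiv.Perm Q))
    (hle : N ≤ S.LMlt) (hnorm : ∀ h ∈ S.LMlt, ∀ n ∈ N, h * n * h⁻¹ ∈ N) :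
    (∀ h ∈ S.LMlt, ∀ x y : Q, pstab N x = pstab N y → pstab N (h x) = pstab N (h y)) ∧
    (S.Idem → ∀ x : Q, S.IsSubalgebra {y | pstab N y = pstab N x}) := by
  have mem_pstab : ∀ (n : Equiv.Perm Q) (w : Q), n ∈ pstab N w ↔ n ∈ N ∧ n w = w := by
    intro n w
    simp [pstab, Subgroup.mem_inf, MulAction.mem_stabilizer_iff]
  have key : ∀ h ∈ S.LMlt, ∀ x y : Q,
      pstab N x = pstab N y → pstab N (h x) = pstab N (h y) := by
    intro h hh x y hxy
    ext n
    rw [mem_pstab, mem_pstab]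
    constructor
    · rintro ⟨hnN, hfix⟩
      have h1 : h⁻¹ * n * h ∈ N := by
        simpa using hnorm h⁻¹ (inv_mem hh) n hnN
      have h2 : (h⁻¹ * n * h) x = x := by
        simp only [Equiv.Perm.mul_apply]
        rw [hfix, Equiv.Perm.coe_inv, Equiv.symm_apply_apply]
      have h3 : h⁻¹ * n * h ∈ pstab N y := by
        rw [← hxy, mem_pstab]; exact ⟨h1, h2⟩
      rw [mem_pstab] at h3
      refine ⟨hnN, ?_⟩
      have := h3.2
      simp only [Equiv.Perm.mul_apply] at this
      have := congrArg h this
      rwa [Equiv.Perm.coe_inv, Equiv.apply_symm_apply] at this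
    · rintro ⟨hnN, hfix⟩
      have h1 : h⁻¹ * n * h ∈ N := by
        simpa using hnorm h⁻¹ (inv_mem hh) n hnN
      have h2 : (h⁻¹ * n * h) y = y := by
        simp only [Equiv.Perm.mul_apply]
        rw [hfix, Equiv.Perm.coe_inv, Equiv.symm_apply_apply]
      have h3 : h⁻¹ * n * h ∈ pstab N x := by
        rw [hxy, mem_pstab]; exact ⟨h1, h2⟩
      rw [mem_pstab] at h3
      refine ⟨hnN, ?_⟩
      have := h3.2
      simp only [Equiv.Perm.mul_apply] at this
      have := congrArg h this
      rwa [Equiv.Perm.coe_inv, Equiv.apply_symm_apply] at this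
  refine ⟨key, ?_⟩
  intro hid x y hy z hz
  have hyz : pstab N y = pstab N z := hy.trans hz.symm
  have hop := key (S.L y) (S.L_mem_lmlt y) y z hyz
  have hld := key (S.L y)⁻¹ (inv_mem (S.L_mem_lmlt y)) y z hyz
  have hLyy : S.L y y = y := hid y
  have hLyz : S.L y z = S.op y z := rfl
  have hinvy : (S.L y)⁻¹ y = y := by
    have : (S.L y)⁻¹ (S.L y y) = (S.L y)⁻¹ y := by rw [hLyy]
    rw [Equiv.Perm.coe_inv, Equiv.symm_apply_apply] at this
    exact this.symm
  have hinvz : (S.L y)⁻¹ z = S.ld y z := rfl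
  constructor
  · show pstab N (S.op y z) = pstab N x
    rw [← hLyz, ← hop, hLyy, hy]
  · show pstab N (S.ld y z) = pstab N x
    rw [← hinvz, ← hld, hinvy, hy]
end

section
/- Let Q be a finite nilpotent idempotent superconnected left quasigroup and p a prime. Then p divides |Q| if and only if p divides |Dis(Q)|. In particular, if |Q| = p^n then Dis(Q) is a p-group. -/
theorem Equiv.Perm.apply_inv_self {α : Type*} (f : Equiv.Perm α) (x : α) : f (f⁻¹ x) = x :=
  f.apply_symm_apply x

theorem Equiv.Perm.inv_apply_self {α : Type*} (f : Equiv.Perm α) (x : α) : f⁻¹ (f x) = x :=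
  f.symm_apply_apply x


namespace LeftQuasigroup

variable {Q : Type*} (S : LeftQuasigroup Q)

theorem L_apply (x y : Q) : S.L x y = S.op x y := rfl

theorem L_inv_apply (x y : Q) : (S.L x)⁻¹ y = S.ld x y := rfl

/-- Push elements of the left multiplication group along a morphism. -/
theorem lmlt_push {Q1 Q2 : Type*} (S1 : LeftQuasigroup Q1) (S2 : LeftQuasigroup Q2)
    (f : Q1 → Q2) (hop : ∀ x z, f (S1.op x z) = S2.op (f x) (f z)) :
    ∀ g ∈ S1.LMlt, ∃ k ∈ S2.LMlt, ∀ z, k (f z) = f (g z) := by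
  intro g hg
  induction hg using Subgroup.closure_induction with
  | mem g hgen =>
    obtain ⟨x, rfl⟩ := hgen
    exact ⟨S2.L (f x), S2.L_mem_lmlt _, fun z => (hop x z).symm⟩
  | one => exact ⟨1, one_mem _, fun z => rfl⟩
  | mul a b _ _ ha hb =>
    obtain ⟨ka, hka, hae⟩ := ha; obtain ⟨kb, hkb, hbe⟩ := hb
    refine ⟨ka * kb, mul_mem hka hkb, fun z => ?_⟩
    simp only [Equiv.Perm.mul_apply]; rw [hbe, hae]
  | inv a _ ha =>
    obtain ⟨ka, hka, hae⟩ := ha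
    refine ⟨ka⁻¹, inv_mem hka, fun z => ?_⟩
    have h2 := hae (a⁻¹ z)
    rw [Equiv.Perm.apply_inv_self] at h2
    rw [← h2, Equiv.Perm.inv_apply_self]

/-- Push elements of the displacement group along a morphism. -/
theorem dis_push {Q1 Q2 : Type*} (S1 : LeftQuasigroup Q1) (S2 : LeftQuasigroup Q2)
    (f : Q1 → Q2) (hop : ∀ x z, f (S1.op x z) = S2.op (f x) (f z))
    (hld : ∀ x z, f (S1.ld x z) = S2.ld (f x) (f z)) :
    ∀ g ∈ S1.Dis, ∃ k ∈ S2.Dis, ∀ z, k (f z) = f (g z) := by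
  intro g hg
  induction hg using Subgroup.closure_induction with
  | mem g hgen =>
    obtain ⟨h, hh, x, y, -, rfl⟩ := hgen
    obtain ⟨k, hk, hke⟩ := lmlt_push S1 S2 f hop h hh
    have hkinv : ∀ z, k⁻¹ (f z) = f (h⁻¹ z) := by
      intro z
      have h2 := hke (h⁻¹ z)
      rw [Equiv.Perm.apply_inv_self] at h2
      rw [← h2, Equiv.Perm.inv_apply_self]
    refine ⟨k * (S2.L (f x) * (S2.L (f y))⁻¹) * k⁻¹,
      Subgroup.subset_closure ⟨k, hk, f x, f y, trivial, rfl⟩, fun z => ?_⟩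
    simp only [Equiv.Perm.mul_apply]
    rw [hkinv, L_inv_apply, L_inv_apply, ← hld, L_apply, L_apply, ← hop, hke]
  | one => exact ⟨1, one_mem _, fun z => rfl⟩
  | mul a b _ _ ha hb =>
    obtain ⟨ka, hka, hae⟩ := ha; obtain ⟨kb, hkb, hbe⟩ := hb
    refine ⟨ka * kb, mul_mem hka hkb, fun z => ?_⟩
    simp only [Equiv.Perm.mul_apply]; rw [hbe, hae]
  | inv a _ ha =>
    obtain ⟨ka, hka, hae⟩ := ha
    refine ⟨ka⁻¹, inv_mem hka, fun z => ?_⟩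
    have h2 := hae (a⁻¹ z)
    rw [Equiv.Perm.apply_inv_self] at h2
    rw [← h2, Equiv.Perm.inv_apply_self]

theorem univ_subalgebra : S.IsSubalgebra Set.univ := fun _ _ _ _ => ⟨trivial, trivial⟩

theorem conn_of_superconn (hsc : S.Superconnected) : S.Connected := by
  intro x y
  obtain ⟨h, hh, he⟩ := hsc Set.univ S.univ_subalgebra ⟨x, trivial⟩ ⟨y, trivial⟩
  obtain ⟨k, hk, hke⟩ := lmlt_push (S.subLQ _ S.univ_subalgebra) S Subtype.val
    (fun _ _ => rfl) h hh
  refine ⟨k, hk, ?_⟩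
  have := hke ⟨y, trivial⟩
  rw [he] at this
  exact this

/-- The displacement group is normalized by the multiplication group. -/
theorem dis_conj : ∀ h ∈ S.LMlt, ∀ g ∈ S.Dis, h * g * h⁻¹ ∈ S.Dis := by
  intro h hh g hg
  induction hg using Subgroup.closure_induction with
  | mem g hgen =>
    obtain ⟨h', hh', x, y, -, rfl⟩ := hgen
    exact Subgroup.subset_closure ⟨h * h', mul_mem hh hh', x, y, trivial, by group⟩
  | one => simpa using one_mem S.Dis
  | mul a b _ _ ha hb =>
    have : h * (a * b) * h⁻¹ = (h * a * h⁻¹) * (h * b * h⁻¹) := by group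
    rw [this]; exact mul_mem ha hb
  | inv a _ ha =>
    have : h * a⁻¹ * h⁻¹ = (h * a * h⁻¹)⁻¹ := by group
    rw [this]; exact inv_mem ha

theorem lmlt_decomp (a : Q) : ∀ h ∈ S.LMlt, ∃ g ∈ S.Dis, ∃ m : ℤ, h = g * (S.L a) ^ m := by
  intro h hh
  induction hh using Subgroup.closure_induction with
  | mem h hgen =>
    obtain ⟨x, rfl⟩ := hgen
    refine ⟨S.L x * (S.L a)⁻¹, Subgroup.subset_closure ⟨1, one_mem _, x, a, trivial, by group⟩,
      1, by group⟩
  | one => exact ⟨1, one_mem _, 0, by group⟩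
  | mul h1 h2 hm1 hm2 ih1 ih2 =>
    obtain ⟨g1, hg1, m1, rfl⟩ := ih1
    obtain ⟨g2, hg2, m2, rfl⟩ := ih2
    refine ⟨g1 * ((S.L a) ^ m1 * g2 * ((S.L a) ^ m1)⁻¹), mul_mem hg1
      (S.dis_conj _ (zpow_mem (S.L_mem_lmlt a) m1) _ hg2), m1 + m2, ?_⟩
    rw [zpow_add]; group
  | inv h1 hm1 ih1 =>
    obtain ⟨g1, hg1, m1, rfl⟩ := ih1
    refine ⟨((S.L a) ^ m1)⁻¹ * g1⁻¹ * (S.L a) ^ m1, ?_, -m1, ?_⟩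
    · have := S.dis_conj _ (inv_mem (zpow_mem (S.L_mem_lmlt a) m1)) _ (inv_mem hg1)
      simpa using this
    · rw [zpow_neg]; group

theorem fix_zpow (g : Equiv.Perm Q) (x : Q) (h : g x = x) : ∀ m : ℤ, (g ^ m) x = x := by
  have hn : ∀ n : ℕ, (g ^ n) x = x := by
    intro n
    induction n with
    | zero => simp
    | succ n ih => rw [pow_succ]; simp only [Equiv.Perm.mul_apply]; rw [h, ih]
  intro m
  rcases m with n | n
  · simpa using hn n
  · have h2 : (g ^ ((n : ℤ) + 1)) x = x := by
      rw [show ((n : ℤ) + 1) = ((n + 1 : ℕ) : ℤ) by push_cast; ring, zpow_natCast]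
      exact hn (n + 1)
    rw [Int.negSucc_eq, zpow_neg]
    conv_lhs => rw [← h2]
    exact Equiv.Perm.inv_apply_self _ _

theorem dis_transitive (hi : S.Idem) (hconn : S.Connected) (x y : Q) :
    ∃ g ∈ S.Dis, g y = x := by
  obtain ⟨h, hh, he⟩ := hconn x y
  obtain ⟨g, hg, m, rfl⟩ := S.lmlt_decomp y h hh
  refine ⟨g, hg, ?_⟩
  have : ((S.L y) ^ m) y = y := LeftQuasigroup.fix_zpow _ _ (hi y) m
  rw [← he]
  simp only [Equiv.Perm.mul_apply, this]

theorem card_dvd_card_dis [Finite Q] [Nonempty Q] (hi : S.Idem) (hconn : S.Connected) :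
    Nat.card Q ∣ Nat.card ↥S.Dis := by
  classical
  have x : Q := Classical.arbitrary Q
  have horb : MulAction.orbit ↥S.Dis x = Set.univ := by
    ext y
    simp only [Set.mem_univ, iff_true, MulAction.mem_orbit_iff]
    obtain ⟨g, hg, hgx⟩ := S.dis_transitive hi hconn y x
    exact ⟨⟨g, hg⟩, hgx⟩
  have h1 : Nat.card Q = Nat.card (MulAction.orbit ↥S.Dis x) := by
    rw [horb]; exact (Nat.card_congr (Equiv.Set.univ Q)).symm
  rw [h1, Nat.card_congr (MulAction.orbitEquivQuotientStabilizer ↥S.Dis x)]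
  exact ⟨Nat.card ↥(MulAction.stabilizer ↥S.Dis x),
    Subgroup.card_eq_card_quotient_mul_card_subgroup _⟩

end LeftQuasigroup


/-- Rename variables in a term. -/
def mapVar : ∀ {n m : ℕ}, (Fin n → Fin m) → LQTerm n → LQTerm m
  | _, _, f, .var i => .var (f i)
  | _, _, f, .op t s => .op (mapVar f t) (mapVar f s)
  | _, _, f, .ld t s => .ld (mapVar f t) (mapVar f s)

theorem evalT_mapVar {Q : Type*} (S : LeftQuasigroup Q) :
    ∀ {n m : ℕ} (f : Fin n → Fin m) (t : LQTerm n) (v : Fin m → Q),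
    evalT S (mapVar f t) v = evalT S t (v ∘ f) := by
  intro n m f t v
  induction t <;> simp [mapVar, evalT, *]

/-- The embedding keeping variable `0` and shifting the others by one. -/
def embFin (m : ℕ) : Fin (m + 1) → Fin (m + 1 + 1) := Fin.cases 0 (fun i => i.succ.succ)

theorem cons_comp_embFin {Q : Type*} {m : ℕ} (y x : Q) (v : Fin m → Q) :
    (Fin.cons y (Fin.cons x v) : Fin (m + 1 + 1) → Q) ∘ embFin m = Fin.cons y v := by
  funext i
  refine Fin.cases ?_ (fun j => ?_) i
  · simp [embFin]
  · simp [embFin]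

/-- The term associated to a word. -/
def listTerm {Q : Type*} : (l : List (Q × Bool)) → LQTerm (l.length + 1)
  | [] => .var 0
  | (_, true) :: l => .op (.var 1) (mapVar (embFin _) (listTerm l))
  | (_, false) :: l => .ld (.var 1) (mapVar (embFin _) (listTerm l))

/-- The parameters of a word. -/
def wparams {Q : Type*} (l : List (Q × Bool)) : Fin l.length → Q := fun i => (l.get i).1

theorem wparams_cons {Q : Type*} (p : Q × Bool) (l : List (Q × Bool)) :
    wparams (p :: l) = Fin.cons p.1 (wparams l) := by
  funext i
  refine Fin.cases rfl (fun j => rfl) i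

theorem const_comp_embFin {Q : Type*} {m : ℕ} (y a : Q) :
    (Fin.cons y (fun _ => a) : Fin (m + 1 + 1) → Q) ∘ embFin m = Fin.cons y (fun _ => a) := by
  funext i
  refine Fin.cases ?_ (fun j => ?_) i
  · simp [embFin]
  · simp [embFin]

theorem const_one {Q : Type*} {m : ℕ} (y a : Q) :
    (Fin.cons y (fun _ => a) : Fin (m + 1 + 1) → Q) 1 = a := by
  rw [show (1 : Fin (m + 1 + 1)) = Fin.succ 0 from (Fin.succ_zero_eq_one).symm, Fin.cons_succ]

theorem cons_one {Q : Type*} {m : ℕ} (y x : Q) (v : Fin m → Q) :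
    (Fin.cons y (Fin.cons x v) : Fin (m + 1 + 1) → Q) 1 = x := by
  rw [show (1 : Fin (m + 1 + 1)) = Fin.succ 0 from (Fin.succ_zero_eq_one).symm, Fin.cons_succ,
    Fin.cons_zero]

namespace LeftQuasigroup

/-- The permutation associated to a word. -/
def wordPerm {Q : Type*} (S : LeftQuasigroup Q) : List (Q × Bool) → Equiv.Perm Q
  | [] => 1
  | (x, true) :: l => S.L x * wordPerm S l
  | (x, false) :: l => (S.L x)⁻¹ * wordPerm S l

variable {Q : Type*} (S : LeftQuasigroup Q)

/-- The exponent sum of a word. -/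
def wordSum : List (Q × Bool) → ℤ
  | [] => 0
  | (_, true) :: l => wordSum l + 1
  | (_, false) :: l => wordSum l - 1

theorem wordPerm_append (l1 l2 : List (Q × Bool)) :
    S.wordPerm (l1 ++ l2) = S.wordPerm l1 * S.wordPerm l2 := by
  induction l1 with
  | nil => simp [wordPerm]
  | cons p l ih => obtain ⟨x, b | b⟩ := p <;> simp [wordPerm, ih, mul_assoc]

theorem wordSum_append (l1 l2 : List (Q × Bool)) :
    wordSum (l1 ++ l2) = wordSum l1 + wordSum l2 := by
  induction l1 with
  | nil => simp [wordSum]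
  | cons p l ih => obtain ⟨x, b | b⟩ := p <;> simp [wordSum, ih] <;> ring

/-- The inverse word. -/
def invWord (l : List (Q × Bool)) : List (Q × Bool) := l.reverse.map (fun p => (p.1, !p.2))

theorem invWord_cons (p : Q × Bool) (l : List (Q × Bool)) :
    invWord (p :: l) = invWord l ++ [(p.1, !p.2)] := by
  simp [invWord]

theorem wordPerm_invWord (l : List (Q × Bool)) : S.wordPerm (invWord l) = (S.wordPerm l)⁻¹ := by
  induction l with
  | nil => simp [invWord, wordPerm]
  | cons p l ih =>
    rw [invWord_cons, wordPerm_append, ih]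
    obtain ⟨x, b | b⟩ := p <;> simp [wordPerm, mul_inv_rev]

theorem wordSum_invWord (l : List (Q × Bool)) : wordSum (invWord l) = -wordSum l := by
  induction l with
  | nil => simp [invWord, wordSum]
  | cons p l ih =>
    rw [invWord_cons, wordSum_append, ih]
    obtain ⟨x, b | b⟩ := p <;> simp [wordSum] <;> ring

theorem lmlt_word : ∀ h ∈ S.LMlt, ∃ l, S.wordPerm l = h := by
  intro h hh
  induction hh using Subgroup.closure_induction with
  | mem h hgen =>
    obtain ⟨x, rfl⟩ := hgen
    exact ⟨[(x, true)], by simp [wordPerm]⟩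
  | one => exact ⟨[], rfl⟩
  | mul a b _ _ ha hb =>
    obtain ⟨la, rfl⟩ := ha; obtain ⟨lb, rfl⟩ := hb
    exact ⟨la ++ lb, S.wordPerm_append la lb⟩
  | inv a _ ha =>
    obtain ⟨la, rfl⟩ := ha
    exact ⟨invWord la, S.wordPerm_invWord la⟩

theorem dis_word : ∀ g ∈ S.Dis, ∃ l, wordSum l = 0 ∧ S.wordPerm l = g := by
  intro g hg
  induction hg using Subgroup.closure_induction with
  | mem g hgen =>
    obtain ⟨h, hh, x, y, -, rfl⟩ := hgen
    obtain ⟨lh, rfl⟩ := S.lmlt_word h hh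
    refine ⟨lh ++ ((x, true) :: (y, false) :: invWord lh), ?_, ?_⟩
    · rw [wordSum_append]
      simp only [wordSum, wordSum_invWord]
      ring
    · rw [wordPerm_append]
      simp only [wordPerm, wordPerm_invWord]
      group
  | one => exact ⟨[], rfl, rfl⟩
  | mul a b _ _ ha hb =>
    obtain ⟨la, hsa, rfl⟩ := ha; obtain ⟨lb, hsb, rfl⟩ := hb
    exact ⟨la ++ lb, by rw [wordSum_append, hsa, hsb]; ring, S.wordPerm_append la lb⟩
  | inv a _ ha =>
    obtain ⟨la, hsa, rfl⟩ := ha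
    exact ⟨invWord la, by rw [wordSum_invWord, hsa]; ring, S.wordPerm_invWord la⟩

theorem evalA : ∀ (l : List (Q × Bool)) (y : Q),
    evalT S (listTerm l) (Fin.cons y (wparams l)) = S.wordPerm l y := by
  intro l
  induction l with
  | nil => intro y; simp [listTerm, evalT, wordPerm]
  | cons p l ih =>
    intro y
    obtain ⟨x, b | b⟩ := p <;>
      simp only [listTerm, evalT, evalT_mapVar, wparams_cons, cons_comp_embFin, cons_one, ih,
        wordPerm, Equiv.Perm.mul_apply, L_apply, L_inv_apply]

theorem evalB : ∀ (l : List (Q × Bool)) (y a : Q),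
    evalT S (listTerm l) (Fin.cons y (fun _ => a)) = ((S.L a) ^ (wordSum l)) y := by
  intro l
  induction l with
  | nil => intro y a; simp [listTerm, evalT, wordSum]
  | cons p l ih =>
    intro y a
    obtain ⟨x, b | b⟩ := p
    · simp only [listTerm, evalT, evalT_mapVar, wordSum, List.length_cons, const_comp_embFin, const_one, ih]
      have h3 : (S.L a) ^ (wordSum l - 1) = (S.L a)⁻¹ * (S.L a) ^ (wordSum l) := by
        rw [show wordSum l - 1 = -1 + wordSum l by ring, zpow_add, zpow_neg_one]
      rw [h3, Equiv.Perm.mul_apply, L_inv_apply]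
    · simp only [listTerm, evalT, evalT_mapVar, wordSum, List.length_cons, const_comp_embFin, const_one, ih]
      have h3 : (S.L a) ^ (wordSum l + 1) = S.L a * (S.L a) ^ (wordSum l) := by
        rw [show wordSum l + 1 = 1 + wordSum l by ring, zpow_add, zpow_one]
      rw [h3, Equiv.Perm.mul_apply, L_apply]

/-- Central semiregularity: a displacement fixing a point fixes its whole `α`-class
pointwise, provided `α` is central over the equality. -/
theorem dis_semireg (α : Setoid Q) (hCC : CC S α.r (fun _ _ => True) (fun x y : Q => x = y))
    {g : Equiv.Perm Q} (hg : g ∈ S.Dis) {a : Q} (ha : g a = a) :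
    ∀ y, α.r y a → g y = y := by
  obtain ⟨l, hs, hp⟩ := S.dis_word g hg
  intro y hy
  have key := hCC l.length (listTerm l) a y (wparams l) (fun _ => a) (α.symm hy)
    (fun _ => trivial)
  rw [S.evalA, S.evalB, S.evalA, S.evalB, hs, hp, zpow_zero] at key
  simpa using key (by simpa using ha)

end LeftQuasigroup


/-- Pushforward of a setoid along the quotient by a smaller setoid. -/
def pushSetoid {Q : Type*} (α β : Setoid Q) (hle : ∀ x y, α.r x y → β.r x y) :
    Setoid (Quotient α) where
  r := Quotient.lift₂ β.r (fun a b a' b' ha hb => propext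
    ⟨fun h => β.trans (β.symm (hle _ _ ha)) (β.trans h (hle _ _ hb)),
     fun h => β.trans (hle _ _ ha) (β.trans h (β.symm (hle _ _ hb)))⟩)
  iseqv := by
    constructor
    · intro q
      obtain ⟨a, rfl⟩ := Quotient.exists_rep q
      exact β.refl a
    · intro q1 q2
      obtain ⟨a, rfl⟩ := Quotient.exists_rep q1
      obtain ⟨b, rfl⟩ := Quotient.exists_rep q2
      exact fun h => β.symm h
    · intro q1 q2 q3
      obtain ⟨a, rfl⟩ := Quotient.exists_rep q1
      obtain ⟨b, rfl⟩ := Quotient.exists_rep q2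
      obtain ⟨d, rfl⟩ := Quotient.exists_rep q3
      exact fun h1 h2 => β.trans h1 h2

theorem pushSetoid_mk {Q : Type*} (α β : Setoid Q) (hle) (x y : Q) :
    (pushSetoid α β hle).r (Quotient.mk α x) (Quotient.mk α y) ↔ β.r x y := Iff.rfl

theorem cons_mk {Q : Type*} (α : Setoid Q) {n : ℕ} (x : Q) (z : Fin n → Q) :
    (Fin.cons (Quotient.mk α x) (fun i => Quotient.mk α (z i)) : Fin (n + 1) → Quotient α)
      = fun j => Quotient.mk α ((Fin.cons x z : Fin (n + 1) → Q) j) := by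
  funext j
  refine Fin.cases rfl (fun i => ?_) j
  simp

namespace LeftQuasigroup

variable {Q : Type*} (S : LeftQuasigroup Q)

theorem push_congruence (α β : Setoid Q) (hα : S.IsCongruence α) (hβ : S.IsCongruence β)
    (hle : ∀ x y, α.r x y → β.r x y) :
    (S.quotLQ α hα).IsCongruence (pushSetoid α β hle) := by
  constructor
  · intro x y z w h1 h2
    obtain ⟨a, rfl⟩ := Quotient.exists_rep x
    obtain ⟨b, rfl⟩ := Quotient.exists_rep y
    obtain ⟨d, rfl⟩ := Quotient.exists_rep z
    obtain ⟨e, rfl⟩ := Quotient.exists_rep w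
    exact hβ.op_compat h1 h2
  · intro x y z w h1 h2
    obtain ⟨a, rfl⟩ := Quotient.exists_rep x
    obtain ⟨b, rfl⟩ := Quotient.exists_rep y
    obtain ⟨d, rfl⟩ := Quotient.exists_rep z
    obtain ⟨e, rfl⟩ := Quotient.exists_rep w
    exact hβ.ld_compat h1 h2

theorem evalT_quot (α : Setoid Q) (hα : S.IsCongruence α) :
    ∀ {n : ℕ} (t : LQTerm n) (v : Fin n → Q),
    evalT (S.quotLQ α hα) t (fun i => Quotient.mk α (v i)) = Quotient.mk α (evalT S t v) := by
  intro n t v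
  induction t with
  | var i => simp only [evalT]
  | op t s iht ihs =>
    simp only [evalT, iht, ihs]
    rfl
  | ld t s iht ihs =>
    simp only [evalT, iht, ihs]
    rfl

theorem cc_quot (α : Setoid Q) (hα : S.IsCongruence α) (β γ : Setoid Q)
    (hleβ : ∀ x y, α.r x y → β.r x y) (hleγ : ∀ x y, α.r x y → γ.r x y)
    (h : CC S β.r (fun _ _ => True) γ.r) :
    CC (S.quotLQ α hα) (pushSetoid α β hleβ).r (fun _ _ => True) (pushSetoid α γ hleγ).r := by
  intro n t xq yq zq uq hxy hb hprem
  obtain ⟨x, rfl⟩ := Quotient.exists_rep xq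
  obtain ⟨y, rfl⟩ := Quotient.exists_rep yq
  choose z hz using fun i => Quotient.exists_rep (zq i)
  choose u hu using fun i => Quotient.exists_rep (uq i)
  have hzq : zq = fun i => Quotient.mk α (z i) := funext fun i => (hz i).symm
  have huq : uq = fun i => Quotient.mk α (u i) := funext fun i => (hu i).symm
  subst hzq
  subst huq
  rw [cons_mk, cons_mk, evalT_quot, evalT_quot] at hprem
  rw [cons_mk, cons_mk, evalT_quot, evalT_quot]
  exact (pushSetoid_mk α γ hleγ _ _).mpr
    (h n t x y z u ((pushSetoid_mk α β hleβ _ _).mp hxy) (fun _ => trivial)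
      ((pushSetoid_mk α γ hleγ _ _).mp hprem))

theorem quot_idem (hi : S.Idem) (α : Setoid Q) (hα : S.IsCongruence α) :
    (S.quotLQ α hα).Idem := by
  intro q
  obtain ⟨a, rfl⟩ := Quotient.exists_rep q
  show Quotient.mk α (S.op a a) = Quotient.mk α a
  rw [hi a]

theorem quot_superconn (hsc : S.Superconnected) (α : Setoid Q) (hα : S.IsCongruence α) :
    (S.quotLQ α hα).Superconnected := by
  intro B hB
  have hA : S.IsSubalgebra {x | Quotient.mk α x ∈ B} := by
    intro x hx y hy
    exact ⟨(hB hx hy).1, (hB hx hy).2⟩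
  intro b1 b2
  obtain ⟨x, hx⟩ := Quotient.exists_rep (b1 : Quotient α)
  obtain ⟨y, hy⟩ := Quotient.exists_rep (b2 : Quotient α)
  have hxA : x ∈ {x | Quotient.mk α x ∈ B} := by
    show Quotient.mk α x ∈ B; rw [hx]; exact b1.2
  have hyA : y ∈ {x | Quotient.mk α x ∈ B} := by
    show Quotient.mk α y ∈ B; rw [hy]; exact b2.2
  obtain ⟨h, hh, he⟩ := hsc _ hA ⟨x, hxA⟩ ⟨y, hyA⟩
  obtain ⟨k, hk, hke⟩ := lmlt_push (S.subLQ _ hA) ((S.quotLQ α hα).subLQ B hB)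
    (fun z => ⟨Quotient.mk α z.1, z.2⟩) (fun x z => rfl) h hh
  refine ⟨k, hk, ?_⟩
  have h2 := hke ⟨y, hyA⟩
  rw [he] at h2
  have e1 : (⟨Quotient.mk α x, hxA⟩ : ↥B) = b1 := Subtype.ext hx
  have e2 : (⟨Quotient.mk α y, hyA⟩ : ↥B) = b2 := Subtype.ext hy
  rw [e1, e2] at h2
  exact h2

/-- The homomorphism from the displacement group to permutations of the quotient. -/
def descHom (α : Setoid Q) (hα : S.IsCongruence α) : ↥S.Dis →* Equiv.Perm (Quotient α) where
  toFun g :=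
    { toFun := Quotient.map g.1 (by
        intro x y h
        exact S.lmlt_maps hα (S.disRel_le_lmlt _ g.2) x y h)
      invFun := Quotient.map ⇑(g.1⁻¹) (by
        intro x y h
        exact S.lmlt_maps hα (inv_mem (S.disRel_le_lmlt _ g.2)) x y h)
      left_inv := by
        intro q
        obtain ⟨a, rfl⟩ := Quotient.exists_rep q
        simp
      right_inv := by
        intro q
        obtain ⟨a, rfl⟩ := Quotient.exists_rep q
        simp }
  map_one' := by
    ext q
    obtain ⟨a, rfl⟩ := Quotient.exists_rep q
    simp
    rfl
  map_mul' := by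
    intro g1 g2
    ext q
    obtain ⟨a, rfl⟩ := Quotient.exists_rep q
    simp
    rfl

theorem descHom_apply_mk (α : Setoid Q) (hα : S.IsCongruence α) (g : ↥S.Dis) (x : Q) :
    S.descHom α hα g (Quotient.mk α x) = Quotient.mk α (g.1 x) := rfl

theorem descHom_range_le (α : Setoid Q) (hα : S.IsCongruence α) :
    (S.descHom α hα).range ≤ (S.quotLQ α hα).Dis := by
  rintro k ⟨g, rfl⟩
  obtain ⟨k', hk', hke⟩ := dis_push S (S.quotLQ α hα) (Quotient.mk α) (fun x z => rfl)
    (fun x z => rfl) g.1 g.2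
  have hEq : S.descHom α hα g = k' := by
    ext q
    obtain ⟨a, rfl⟩ := Quotient.exists_rep q
    rw [descHom_apply_mk]
    exact (hke a).symm
  rw [hEq]
  exact hk'

theorem card_blocks [Finite Q] (hconn : S.Connected) (α : Setoid Q) (hα : S.IsCongruence α)
    (a : Q) : Nat.card Q = Nat.card (Quotient α) * Nat.card {x // α.r x a} := by
  classical
  haveI := Fintype.ofFinite Q
  haveI := Fintype.ofFinite (Quotient α)
  haveI : ∀ q : Quotient α, Fintype {x // Quotient.mk α x = q} := fun q => Fintype.ofFinite _
  have hfib : ∀ q : Quotient α, Nat.card {x // Quotient.mk α x = q} = Nat.card {x // α.r x a} := by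
    intro q
    obtain ⟨b, rfl⟩ := Quotient.exists_rep q
    have e2 : {x // Quotient.mk α x = Quotient.mk α b} ≃ {x // α.r x b} :=
      Equiv.subtypeEquivRight (fun x => ⟨fun h => Quotient.exact h, fun h => Quotient.sound h⟩)
    rw [Nat.card_congr e2]
    obtain ⟨h, hh, he⟩ := hconn a b
    refine Nat.card_congr ⟨fun x => ⟨h x.1, ?_⟩, fun y => ⟨h⁻¹ y.1, ?_⟩, ?_, ?_⟩
    · have h3 := S.lmlt_maps hα hh x.1 b x.2
      rw [he] at h3
      exact h3
    · have h3 := S.lmlt_maps hα (inv_mem hh) y.1 a y.2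
      have h4 : h⁻¹ a = b := by rw [← he, Equiv.Perm.inv_apply_self]
      rw [h4] at h3
      exact h3
    · intro x
      exact Subtype.ext (Equiv.Perm.inv_apply_self _ _)
    · intro y
      exact Subtype.ext (Equiv.Perm.apply_inv_self _ _)
  calc Nat.card Q = Nat.card (Σ q : Quotient α, {x // Quotient.mk α x = q}) :=
        Nat.card_congr (Equiv.sigmaFiberEquiv _).symm
    _ = ∑ q : Quotient α, Nat.card {x // Quotient.mk α x = q} := by
        rw [Nat.card_eq_fintype_card, Fintype.card_sigma]
        exact Finset.sum_congr rfl (fun q _ => Nat.card_eq_fintype_card.symm)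
    _ = ∑ _q : Quotient α, Nat.card {x // α.r x a} :=
        Finset.sum_congr rfl (fun q _ => hfib q)
    _ = Nat.card (Quotient α) * Nat.card {x // α.r x a} := by
        rw [Finset.sum_const, smul_eq_mul, Finset.card_univ, ← Nat.card_eq_fintype_card]

theorem term_compat (α : Setoid Q) (hα : S.IsCongruence α) :
    ∀ {n : ℕ} (t : LQTerm n) (v w : Fin n → Q), (∀ i, α.r (v i) (w i)) →
      α.r (evalT S t v) (evalT S t w) := by
  intro n t v w h
  induction t with
  | var i => simp only [evalT]; exact h i
  | op t s iht ihs => simp only [evalT]; exact hα.op_compat iht ihs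
  | ld t s iht ihs => simp only [evalT]; exact hα.ld_compat iht ihs

theorem cc_self (α : Setoid Q) (hα : S.IsCongruence α) :
    CC S α.r (fun _ _ => True) α.r := by
  intro n t x y z u hxy hb hpre
  have h1 : α.r (evalT S t (Fin.cons y z)) (evalT S t (Fin.cons x z)) :=
    S.term_compat α hα t _ _ (fun i => Fin.cases (α.symm hxy) (fun j => α.refl (z j)) i)
  have h2 : α.r (evalT S t (Fin.cons x u)) (evalT S t (Fin.cons y u)) :=
    S.term_compat α hα t _ _ (fun i => Fin.cases hxy (fun j => α.refl (u j)) i)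
  exact α.trans h1 (α.trans hpre h2)

/-- A central series witnessing nilpotency. -/
def CSeries (n : ℕ) : Prop :=
  ∃ c : ℕ → Setoid Q,
    (∀ k, S.IsCongruence (c k)) ∧
    (∀ x y : Q, (c 0).r x y ↔ x = y) ∧
    (∀ k x y, (c k).r x y → (c (k + 1)).r x y) ∧
    (∀ k, CC S (c (k + 1)).r (fun _ _ => True) (c k).r) ∧
    (∀ x y : Q, (c n).r x y)

theorem cseries_of_nilpotent {n : ℕ} (h : S.NilpotentLength n) : S.CSeries n := by
  obtain ⟨c, hcong, h0, hiter, htop⟩ := h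
  refine ⟨c, hcong, h0, ?_, ?_, htop⟩
  · intro k x y hxy
    have hle := (hiter k (c k) (hcong k)).mp (S.cc_self (c k) (hcong k))
    exact Setoid.le_def.mp hle hxy
  · intro k
    exact (hiter k (c (k + 1)) (hcong (k + 1))).mpr le_rfl

end LeftQuasigroup

universe u

theorem keyLemma : ∀ (n : ℕ) {Q : Type u} [Finite Q] [Nonempty Q] (S : LeftQuasigroup Q),
    S.Idem → S.Superconnected → S.CSeries n → ∀ p : ℕ, p.Prime →
    p ∣ Nat.card ↥S.Dis → p ∣ Nat.card Q := by
  intro n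
  induction n with
  | zero =>
    intro Q _ _ S hi hsc hcs p hp hdvd
    obtain ⟨c, hcong, h0, hmono, hcc, htop⟩ := hcs
    haveI hsub : Subsingleton Q := ⟨fun x y => (h0 x y).mp (htop x y)⟩
    haveI : Subsingleton (Equiv.Perm Q) := ⟨fun f g => Equiv.ext fun x => Subsingleton.elim _ _⟩
    haveI : Subsingleton ↥S.Dis := ⟨fun a b => Subtype.ext (Subsingleton.elim _ _)⟩
    haveI : Unique ↥S.Dis := ⟨⟨1⟩, fun a => Subsingleton.elim a 1⟩
    rw [Nat.card_unique] at hdvd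
    have := Nat.le_of_dvd one_pos hdvd
    have := hp.one_lt
    omega
  | succ n ih =>
    intro Q _ _ S hi hsc hcs p hp hdvd
    obtain ⟨c, hcong, h0, hmono, hcc, htop⟩ := hcs
    have hα : S.IsCongruence (c 1) := hcong 1
    have hle : ∀ k, ∀ x y, (c 1).r x y → (c (k + 1)).r x y := by
      intro k
      induction k with
      | zero => exact fun x y h => h
      | succ k ihk => exact fun x y h => hmono (k + 1) x y (ihk x y h)
    haveI : Nonempty (Quotient (c 1)) := ⟨Quotient.mk (c 1) (Classical.arbitrary Q)⟩
    have hcs' : (S.quotLQ (c 1) hα).CSeries n := by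
      refine ⟨fun k => pushSetoid (c 1) (c (k + 1)) (hle k),
        fun k => S.push_congruence (c 1) (c (k + 1)) hα (hcong (k + 1)) (hle k), ?_, ?_, ?_, ?_⟩
      · intro xq yq
        obtain ⟨x, rfl⟩ := Quotient.exists_rep xq
        obtain ⟨y, rfl⟩ := Quotient.exists_rep yq
        exact ⟨fun h => Quotient.sound h, fun h => @Quotient.exact _ (c 1) x y h⟩
      · intro k xq yq
        obtain ⟨x, rfl⟩ := Quotient.exists_rep xq
        obtain ⟨y, rfl⟩ := Quotient.exists_rep yq
        exact fun h => hmono (k + 1) x y h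
      · intro k
        exact S.cc_quot (c 1) hα (c (k + 2)) (c (k + 1)) (hle (k + 1)) (hle k) (hcc (k + 1))
      · intro xq yq
        obtain ⟨x, rfl⟩ := Quotient.exists_rep xq
        obtain ⟨y, rfl⟩ := Quotient.exists_rep yq
        exact htop x y
    have hcard : Nat.card ↥S.Dis =
        Nat.card (↥S.Dis ⧸ (S.descHom (c 1) hα).ker) * Nat.card ↥(S.descHom (c 1) hα).ker :=
      Subgroup.card_eq_card_quotient_mul_card_subgroup _
    rw [hcard] at hdvd
    rcases (Nat.Prime.dvd_mul hp).mp hdvd with hq | hk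
    · have h1 : p ∣ Nat.card ↥(S.descHom (c 1) hα).range := by
        rwa [Nat.card_congr (QuotientGroup.quotientKerEquivRange (S.descHom (c 1) hα)).toEquiv]
          at hq
      have h2 : p ∣ Nat.card ↥(S.quotLQ (c 1) hα).Dis :=
        dvd_trans h1 (Subgroup.card_dvd_of_le (S.descHom_range_le (c 1) hα))
      have h3 : p ∣ Nat.card (Quotient (c 1)) :=
        ih (S.quotLQ (c 1) hα) (S.quot_idem hi (c 1) hα) (S.quot_superconn hsc (c 1) hα)
          hcs' p hp h2
      rw [S.card_blocks (S.conn_of_superconn hsc) (c 1) hα (Classical.arbitrary Q)]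
      exact Dvd.dvd.mul_right h3 _
    · haveI : Fact p.Prime := ⟨hp⟩
      obtain ⟨g, horder⟩ := exists_prime_orderOf_dvd_card' (G := ↥(S.descHom (c 1) hα).ker) p hk
      set gp : Equiv.Perm Q := ((g : ↥S.Dis) : Equiv.Perm Q) with hgp
      have hgpdis : gp ∈ S.Dis := (g : ↥S.Dis).2
      have hgne : g ≠ 1 := by
        intro h
        rw [h, orderOf_one] at horder
        exact hp.one_lt.ne' horder.symm
      have hgpne : gp ≠ 1 := by
        intro h
        exact hgne (Subtype.ext (Subtype.ext h))
      have hgpp : gp ^ p = 1 := by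
        have h1 : g ^ p = 1 := by
          rw [← horder]
          exact pow_orderOf_eq_one g
        have h2 : (((g ^ p : ↥(S.descHom (c 1) hα).ker) : ↥S.Dis) : Equiv.Perm Q) = 1 := by
          rw [h1]; rfl
        simpa using h2
      have hker' : ∀ x, (c 1).r (gp x) x := by
        intro x
        have h1 : S.descHom (c 1) hα (g : ↥S.Dis) = 1 := g.2
        have h2 : Quotient.mk (c 1) (gp x) = Quotient.mk (c 1) x := by
          rw [← S.descHom_apply_mk (c 1) hα (g : ↥S.Dis) x, h1]
          rfl
        exact @Quotient.exact _ (c 1) _ _ h2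
      have hCCeq : CC S (c 1).r (fun _ _ => True) (fun x y : Q => x = y) := by
        intro m t x y z u hxy hb hpre
        exact (h0 _ _).mp (hcc 0 m t x y z u hxy hb ((h0 _ _).mpr hpre))
      obtain ⟨a, hamove⟩ : ∃ a, gp a ≠ a := by
        by_contra hcon
        push_neg at hcon
        exact hgpne (Equiv.ext hcon)
      have hprop : ∀ x, (c 1).r x a ↔ (c 1).r (gp x) a := fun x =>
        ⟨fun h => (c 1).trans (hker' x) h, fun h => (c 1).trans ((c 1).symm (hker' x)) h⟩
      set σ : Equiv.Perm {x // (c 1).r x a} := gp.subtypePerm (fun x => (hprop x).symm) with hσ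
      have hσp : σ ^ p = 1 := by
        rw [hσ, Equiv.Perm.subtypePerm_pow]
        ext b
        simp [Equiv.Perm.subtypePerm_apply, hgpp]
      have hσne : σ ≠ 1 := by
        intro h
        apply hamove
        have h2 : σ ⟨a, (c 1).refl a⟩ = ⟨a, (c 1).refl a⟩ := by rw [h]; rfl
        exact congrArg Subtype.val h2
      have horderσ : orderOf σ = p := orderOf_eq_prime hσp hσne
      have hPG : IsPGroup p ↥(Subgroup.zpowers σ) :=
        IsPGroup.of_card (n := 1) (by rw [Nat.card_zpowers, horderσ, pow_one])
      have hfix : IsEmpty ↥(MulAction.fixedPoints ↥(Subgroup.zpowers σ) {x // (c 1).r x a}) := by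
        refine ⟨fun b => ?_⟩
        have hb : (⟨σ, Subgroup.mem_zpowers σ⟩ : ↥(Subgroup.zpowers σ)) • b.1 = b.1 :=
          b.2 _
        have hb' : gp b.1.1 = b.1.1 := congrArg Subtype.val hb
        have h4 : gp a = a :=
          S.dis_semireg (c 1) hCCeq hgpdis hb' a ((c 1).symm b.1.2)
        exact hamove h4
      have hmod := IsPGroup.card_modEq_card_fixedPoints hPG (α := {x // (c 1).r x a})
      have h5 : Nat.card ↥(MulAction.fixedPoints ↥(Subgroup.zpowers σ) {x // (c 1).r x a}) = 0 :=
        @Nat.card_of_isEmpty _ hfix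
      rw [h5] at hmod
      have hpb : p ∣ Nat.card {x // (c 1).r x a} := (Nat.modEq_zero_iff_dvd).mp hmod
      rw [S.card_blocks (S.conn_of_superconn hsc) (c 1) hα a]
      exact Dvd.dvd.mul_left hpb _

/-- for a finite nilpotent idempotent superconnected left quasigroup,
`p ∣ |Q| ↔ p ∣ |Dis(Q)|`; in particular if `|Q| = p^n` then `Dis(Q)` is a `p`-group. -/
theorem stmt19 {Q : Type*} [Finite Q] [Nonempty Q] (S : LeftQuasigroup Q)
    (hi : S.Idem) (hsc : S.Superconnected) (hnil : ∃ n, S.NilpotentLength n)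
    (p : ℕ) (hp : p.Prime) :
    (p ∣ Nat.card Q ↔ p ∣ Nat.card ↥S.Dis) ∧
    (∀ n : ℕ, Nat.card Q = p ^ n → IsPGroup p ↥S.Dis) := by
  obtain ⟨n0, hnil0⟩ := hnil
  have hcs := S.cseries_of_nilpotent hnil0
  have hrev : ∀ q : ℕ, q.Prime → q ∣ Nat.card ↥S.Dis → q ∣ Nat.card Q :=
    fun q hq => keyLemma n0 S hi hsc hcs q hq
  have hfwd : Nat.card Q ∣ Nat.card ↥S.Dis := S.card_dvd_card_dis hi (S.conn_of_superconn hsc)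
  constructor
  · exact ⟨fun h => h.trans hfwd, hrev p hp⟩
  · intro n hcard
    haveI : Fact p.Prime := ⟨hp⟩
    rw [IsPGroup.iff_card]
    have hpos : Nat.card ↥S.Dis ≠ 0 := Nat.card_pos.ne'
    have huniq : ∀ {d : ℕ}, d.Prime → d ∣ Nat.card ↥S.Dis → d = p := by
      intro d hd hdvd
      have h1 := hrev d hd hdvd
      rw [hcard] at h1
      exact (Nat.prime_dvd_prime_iff_eq hd hp).mp (Nat.Prime.dvd_of_dvd_pow hd h1)
    exact ⟨_, Nat.eq_prime_pow_of_unique_prime_dvd hpos huniq⟩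
end
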